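/- A single OR constraint with nonempty domains D_x, D_y, D_z ⊆ {0,1} is hyper-arc consistent if and only if it is closed under the six OR rules of BOOL: if D_x = {1} then D_z = {1}; if D_x = {0} and D_y = {0} then D_z = {0}; if D_x = {0} and D_z = {1} then D_y = {1}; if D_y = {0} and D_z = {1} then D_x = {1}; if D_y = {1} then D_z = {1}; if D_z = {0} then D_x = {0} and D_y = {0}. -/
import Mathlib

lemma bool_set_cases (D : Set Bool) (h : D.Nonempty) :
    D = {false} ∨ D = {true} ∨ D = Set.univ := by
  by_cases hf : false ∈ D <;> by_cases ht : true ∈ D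
  · right; right; ext b; cases b <;> simp [hf, ht]
  · left; ext b; cases b <;> simp [hf, ht]
  · right; left; ext b; cases b <;> simp [hf, ht]
  · exact absurd h (by rintro ⟨b, hb⟩; cases b <;> [exact hf hb; exact ht hb])

/-- A single OR constraint with nonempty Boolean domains is hyper-arc consistent
iff it is closed under the six OR rules of BOOL. -/
theorem or_hyperarc_iff_bool_closed (Dx Dy Dz : Set Bool)
    (hx : Dx.Nonempty) (hy : Dy.Nonempty) (hz : Dz.Nonempty) :
    ((∀ a ∈ Dx, ∃ b ∈ Dy, ∃ c ∈ Dz, (a || b) = c) ∧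
     (∀ b ∈ Dy, ∃ a ∈ Dx, ∃ c ∈ Dz, (a || b) = c) ∧
     (∀ c ∈ Dz, ∃ a ∈ Dx, ∃ b ∈ Dy, (a || b) = c))
    ↔
    ((Dx = {true} → Dz = {true}) ∧
     (Dx = {false} → Dy = {false} → Dz = {false}) ∧
     (Dx = {false} → Dz = {true} → Dy = {true}) ∧
     (Dy = {false} → Dz = {true} → Dx = {true}) ∧
     (Dy = {true} → Dz = {true}) ∧
     (Dz = {false} → Dx = {false} ∧ Dy = {false})) := by
  have huf : (Set.univ : Set Bool) ≠ {false} := by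
    intro h; have := h ▸ (Set.mem_univ true); simp at this
  have hut : (Set.univ : Set Bool) ≠ {true} := by
    intro h; have := h ▸ (Set.mem_univ false); simp at this
  have hft : ({false} : Set Bool) ≠ {true} := by
    intro h; have : false ∈ ({true} : Set Bool) := h ▸ rfl; simp at this
  have htf : ({true} : Set Bool) ≠ {false} := by
    intro h; have : true ∈ ({false} : Set Bool) := h ▸ rfl; simp at this
  rcases bool_set_cases Dx hx with rfl | rfl | rfl <;>
  rcases bool_set_cases Dy hy with rfl | rfl | rfl <;>
  rcases bool_set_cases Dz hz with rfl | rfl | rfl <;>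
  simp_all [Set.eq_univ_iff_forall]
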